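/- Let r = r(n) be a sequence of integers with 1 ≤ r(n) ≤ n and r(n)/n → 0 as n → ∞. Then, as n → ∞: for m = 1, (d/dz) S_{n,r}(z) |_{z=0} ∼ (r/2) · log n, and for each fixed integer m ≥ 2, (d^m/dz^m) S_{n,r}(z) |_{z=0} ∼ (−1)^m · (m−2)! · r / (2 · n^{m−1}), where ∼ denotes that the ratio of the two sides tends to 1. -/

import Mathlib

open MeasureTheory Real Filter Finset

/-- `S n r z = Σ_{j=1}^{r} [ log Γ((n−r+j+z)/2) − log Γ((n−r+j)/2) ]`. -/
noncomputable def S (n r : ℕ) (z : ℝ) : ℝ :=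
  ∑ j ∈ Finset.Icc 1 r,
    (Real.log (Real.Gamma (((n : ℝ) - r + j + z) / 2))
      - Real.log (Real.Gamma (((n : ℝ) - r + j) / 2)))

/-- The `m`-th derivative of `z ↦ S n r z` evaluated at `z = 0`. -/
noncomputable def SderivAt0 (n r m : ℕ) : ℝ := iteratedDeriv m (S n r) 0


open Real Filter Finset

lemma log_succ_sub_le {a : ℝ} (ha : 0 < a) : log (a+1) - log a ≤ a⁻¹ := by
  rw [← log_div (by positivity) (by positivity)]
  have h := Real.log_le_sub_one_of_pos (show (0:ℝ) < (a+1)/a by positivity)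
  have : (a+1)/a - 1 = a⁻¹ := by field_simp; ring
  linarith
lemma le_log_succ_sub {a : ℝ} (ha : 0 < a) : (a+1)⁻¹ ≤ log (a+1) - log a := by
  rw [← log_div (by positivity) (by positivity)]
  have h := Real.log_le_sub_one_of_pos (show (0:ℝ) < a/(a+1) by positivity)
  have h2 : Real.log (a/(a+1)) = - Real.log ((a+1)/a) := by
    rw [← Real.log_inv]; congr 1; field_simp
  have : a/(a+1) - 1 = -(a+1)⁻¹ := by field_simp; ring
  linarith

lemma summable_inv_pow_add {c : ℝ} (hc : 0 < c) {p : ℕ} (hp : 2 ≤ p) :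
    Summable fun k : ℕ => ((c+k)^p)⁻¹ := by
  rw [← summable_nat_add_iff 1]
  refine Summable.of_nonneg_of_le (fun k => by positivity) (fun k => ?_)
    (((Real.summable_one_div_nat_pow (p := 1+1)).mpr (by norm_num)).comp_injective (add_left_injective 1))
  have h1 : ((k:ℝ)+1) ≤ c + (k+1) := by push_cast; linarith
  have h2 : (1:ℝ) ≤ (k:ℝ)+1 := by linarith [Nat.cast_nonneg (α := ℝ) k]
  have : ((k:ℝ)+1)^2 ≤ (c+(k+1:ℕ))^p := by
    calc ((k:ℝ)+1)^2 ≤ ((k:ℝ)+1)^p := pow_le_pow_right₀ h2 hp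
    _ ≤ (c+(k+1:ℕ))^p := by
        apply pow_le_pow_left₀ (by positivity); push_cast; linarith
  simp only [Function.comp_apply, one_div, Nat.succ_eq_add_one]
  refine inv_anti₀ (by positivity) ?_
  push_cast at this ⊢
  calc ((k:ℝ)+1)^(1+1) = ((k:ℝ)+1)^2 := by norm_num
  _ ≤ _ := this

lemma tendsto_inv_pow_add {c : ℝ} (hc : 0 < c) {p : ℕ} (hp : 1 ≤ p) :
    Tendsto (fun K : ℕ => (((c+K)^p)⁻¹)) atTop (nhds 0) := by
  apply Tendsto.inv_tendsto_atTop
  apply tendsto_atTop_mono' _ _ (tendsto_natCast_atTop_atTop (R := ℝ))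
  filter_upwards [eventually_ge_atTop 1] with K hK
  have h1 : (1:ℝ) ≤ (K:ℝ) := by exact_mod_cast hK
  calc (K:ℝ) ≤ c + K := by linarith
  _ ≤ (c+K)^p := le_self_pow₀ (by linarith) (by omega)

lemma hasSum_telescope {c : ℕ → ℝ} (h0 : Tendsto c atTop (nhds 0))
    (hmono : ∀ k, c (k+1) ≤ c k) :
    HasSum (fun k => c k - c (k+1)) (c 0) := by
  rw [hasSum_iff_tendsto_nat_of_nonneg (fun i => by linarith [hmono i])]
  have : ∀ n : ℕ, ∑ i ∈ Finset.range n, (c i - c (i+1)) = c 0 - c n :=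
    fun n => Finset.sum_range_sub' c n
  simp only [this]
  simpa using tendsto_const_nhds.sub h0

lemma hasDerivAt_neg_inv_pow {t : ℝ} (ht : 0 < t) (p : ℕ) (hp : 1 ≤ p) :
    HasDerivAt (fun t : ℝ => -(t^p)⁻¹ / p) ((t^(p+1))⁻¹) t := by
  have h1 : HasDerivAt (fun t : ℝ => (t^p)⁻¹)
      (-((p:ℝ) * t^(p-1)) / (t^p)^2) t :=
    (hasDerivAt_pow p t).inv (pow_ne_zero _ ht.ne')
  have h2 := (h1.neg).div_const (p:ℝ)
  refine h2.congr_deriv ?_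
  have hp0 : (p:ℝ) ≠ 0 := by positivity
  obtain ⟨q, rfl⟩ : ∃ q, p = q + 1 := ⟨p-1, by omega⟩
  simp only [Nat.add_sub_cancel]
  have ht' : t ≠ 0 := ht.ne'
  field_simp
  ring

lemma slope_pow_bounds {a : ℝ} (ha : 0 < a) {p : ℕ} (hp : 1 ≤ p) :
    ((a+1)^(p+1))⁻¹ ≤ ((a^p)⁻¹ - ((a+1)^p)⁻¹)/p ∧
      ((a^p)⁻¹ - ((a+1)^p)⁻¹)/p ≤ (a^(p+1))⁻¹ := by
  have hlt : a < a + 1 := by linarith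
  obtain ⟨c, hc, hceq⟩ := exists_hasDerivAt_eq_slope (fun t => -(t^p)⁻¹ / p)
    (fun t => (t^(p+1))⁻¹) hlt
    (by
      apply ContinuousOn.div_const
      apply ContinuousOn.neg
      apply ContinuousOn.inv₀ (continuousOn_pow p)
      intro x hx
      exact pow_ne_zero _ (by have := hx.1; intro h; rw [h] at this; linarith))
    (fun t ht => hasDerivAt_neg_inv_pow (lt_trans ha ht.1) p hp)
  have hc0 : 0 < c := lt_trans ha hc.1
  have hval : (c^(p+1))⁻¹ = ((a^p)⁻¹ - ((a+1)^p)⁻¹)/p := by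
    rw [hceq]; field_simp; ring
  constructor
  · rw [← hval]
    apply inv_anti₀ (by positivity)
    exact pow_le_pow_left₀ (le_of_lt hc0) (le_of_lt hc.2) _
  · rw [← hval]
    apply inv_anti₀ (by positivity)
    exact pow_le_pow_left₀ (le_of_lt ha) (le_of_lt hc.1) _
open Real Filter Finset in
lemma tsum_inv_pow_bounds {x : ℝ} (hx : 0 < x) {p : ℕ} (hp : 1 ≤ p) :
    (x^p)⁻¹/p ≤ ∑' k:ℕ, ((x+k)^(p+1))⁻¹ ∧
    ∑' k:ℕ, ((x+k)^(p+1))⁻¹ ≤ (x^p)⁻¹/p + (x^(p+1))⁻¹ := by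
  set c : ℕ → ℝ := fun k => ((x+k)^p)⁻¹ with hc
  have hck1 : ∀ k : ℕ, c (k+1) = ((x+k+1:ℝ)^p)⁻¹ := by
    intro k; simp only [hc]; push_cast; ring_nf
  have hc0 : c 0 = (x^p)⁻¹ := by simp [hc]
  have hsummable : Summable fun k : ℕ => ((x+k)^(p+1))⁻¹ :=
    summable_inv_pow_add hx (by omega)
  have htel : HasSum (fun k => c k - c (k+1)) (c 0) := by
    apply hasSum_telescope
    · exact tendsto_inv_pow_add hx hp
    · intro k
      rw [hck1]
      apply inv_anti₀ (by positivity)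
      apply pow_le_pow_left₀ (by positivity)
      linarith
  have htel' : HasSum (fun k => (c k - c (k+1))/p) (c 0 / p) := htel.div_const _
  have hterm1 : ∀ k : ℕ, (c k - c (k+1))/p ≤ ((x+k)^(p+1))⁻¹ := by
    intro k
    have h := (slope_pow_bounds (a := x + k) (by positivity) hp).2
    rw [hck1]; exact h
  have hterm2 : ∀ k : ℕ, ((x+k+1:ℝ)^(p+1))⁻¹ ≤ (c k - c (k+1))/p := by
    intro k
    have h := (slope_pow_bounds (a := x + k) (by positivity) hp).1
    rw [hck1]; exact h
  constructor
  · have := Summable.tsum_le_tsum hterm1 htel'.summable hsummable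
    rwa [htel'.tsum_eq, hc0] at this
  · have hs1 : Summable fun k : ℕ => ((x+k+1:ℝ)^(p+1))⁻¹ := by
      have := (summable_nat_add_iff (f := fun k : ℕ => ((x+k)^(p+1))⁻¹) 1).mpr hsummable
      refine this.congr fun k => ?_
      push_cast; ring_nf
    have h2 := Summable.tsum_le_tsum hterm2 hs1 htel'.summable
    rw [htel'.tsum_eq, hc0] at h2
    have hzz := Summable.tsum_eq_zero_add (f := fun k : ℕ => ((x+k)^(p+1))⁻¹) hsummable
    have e1 : ∑' k : ℕ, ((x+((k:ℕ)+1:ℕ):ℝ)^(p+1))⁻¹ = ∑' k : ℕ, ((x+(k:ℝ)+1)^(p+1))⁻¹ := by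
      congr 1; funext k; push_cast; ring_nf
    push_cast at hzz e1
    rw [hzz, e1]
    norm_num
    linarith
open Real Filter Finset in
lemma logGamma_hasSum {x : ℝ} (hx : 0 < x) :
    HasSum (fun k : ℕ => x/(k+1) - Real.log (1+x/(k+1)))
      (Real.log (Real.Gamma x) + Real.log x + x * Real.eulerMascheroniConstant) := by
  set f : ℕ → ℝ := fun k => x/(k+1) - Real.log (1+x/(k+1)) with hf
  have hnonneg : ∀ k, 0 ≤ f k := by
    intro k
    have h1 : (0:ℝ) < 1 + x/(k+1) := by positivity
    have := Real.log_le_sub_one_of_pos h1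
    simp only [hf]; linarith
  rw [hasSum_iff_tendsto_nat_of_nonneg hnonneg]
  have hP : ∀ n : ℕ, ∑ k ∈ Finset.range n, f k =
      Real.BohrMollerup.logGammaSeq x n + Real.log x
        + x * ((harmonic n : ℝ) - Real.log n) := by
    intro n
    have hfact : Real.log (n.factorial) = ∑ k ∈ Finset.range n, Real.log ((k:ℝ)+1) := by
      induction n with
      | zero => simp
      | succ n ih =>
        rw [Finset.sum_range_succ, ← ih, Nat.factorial_succ, Nat.cast_mul,
          Real.log_mul (by positivity) (by exact_mod_cast (Nat.factorial_pos n).ne')]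
        push_cast; ring
    have hharm : (harmonic n : ℝ) = ∑ k ∈ Finset.range n, ((k:ℝ)+1)⁻¹ := by
      rw [harmonic]; push_cast; rfl
    have hsum1 : ∑ k ∈ Finset.range n, f k
        = x * (harmonic n : ℝ)
          + ∑ k ∈ Finset.range n, (Real.log ((k:ℝ)+1) - Real.log (x+k+1)) := by
      rw [hharm, Finset.mul_sum, ← Finset.sum_add_distrib]
      apply Finset.sum_congr rfl
      intro k _
      have h1 : Real.log (x+k+1) - Real.log ((k:ℝ)+1) = Real.log (1+x/(k+1)) := by
        rw [← Real.log_div (by positivity) (by positivity)]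
        congr 1
        field_simp
        ring
      simp only [hf]
      rw [← h1]
      field_simp
      ring
    have hsplit : ∑ m ∈ Finset.range (n+1), Real.log (x + (m:ℕ))
        = ∑ k ∈ Finset.range n, Real.log (x + (k:ℝ) + 1) + Real.log x := by
      rw [Finset.sum_range_succ']
      push_cast
      rw [add_zero]
      congr 1
      apply Finset.sum_congr rfl
      intro k _
      congr 1
      ring
    rw [hsum1, Real.BohrMollerup.logGammaSeq, hfact, hsplit, Finset.sum_sub_distrib]
    ring
  simp only [hP]
  have h1 := Real.BohrMollerup.tendsto_log_gamma hx
  have h2 := Real.tendsto_harmonic_sub_log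
  exact (h1.add tendsto_const_nhds).add (h2.const_mul x)
noncomputable def pg : ℕ → ℝ → ℝ
  | 0 => fun x => Real.log (Real.Gamma x)
  | 1 => fun x => -Real.eulerMascheroniConstant - x⁻¹
      + ∑' k : ℕ, (((k:ℝ)+1)⁻¹ - (x+k+1)⁻¹)
  | (m+2) => fun x => (-1)^m * (m+1).factorial * ∑' k : ℕ, ((x+k)^(m+2))⁻¹

open Real Filter Finset in
lemma hasDerivAt_inv_pow_shift {a : ℝ} {y : ℝ} (hy : 0 < y + a) {p : ℕ} (hp : 1 ≤ p) :
    HasDerivAt (fun y : ℝ => ((y+a)^p)⁻¹) (-(p:ℝ) * (((y+a)^(p+1))⁻¹)) y := by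
  have h1 : HasDerivAt (fun t : ℝ => (t^p)⁻¹) (-(p:ℝ) * ((y+a)^(p+1))⁻¹) (y+a) := by
    have h0 := (hasDerivAt_neg_inv_pow hy p hp).const_mul (-(p:ℝ))
    have hp0 : (p:ℝ) ≠ 0 := by positivity
    have : (fun t : ℝ => -(p:ℝ) * (-(t^p)⁻¹ / p)) = fun t : ℝ => (t^p)⁻¹ := by
      funext t; field_simp
    rw [this] at h0
    convert h0 using 1
  have h2 : HasDerivAt (fun y : ℝ => y + a) 1 y := (hasDerivAt_id y).add_const a
  have := h1.comp y h2
  simpa [Function.comp_def] using this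

open Real Filter Finset in
lemma summable_pg_type {c : ℝ} (hc : 0 < c) {p : ℕ} (hp : 2 ≤ p) :
    Summable fun k : ℕ => ((c+k+1)^p)⁻¹ := by
  refine (summable_inv_pow_add (c := c+1) (by linarith) hp).congr fun k => ?_
  congr 2; ring

open Real Filter Finset in
lemma summable_g0 {x : ℝ} (hx : 0 ≤ x) :
    Summable fun k : ℕ => x/(k+1) - Real.log (1+x/(k+1)) := by
  refine Summable.of_nonneg_of_le (fun k => ?_) (fun k => ?_)
    (((summable_inv_pow_add one_pos le_rfl).congr
      (fun k : ℕ => by norm_num : ∀ k : ℕ, (((1:ℝ)+k)^2)⁻¹ = ((1+(k:ℝ))^2)⁻¹)).mul_left (x^2))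
  · have h1 : (0:ℝ) < 1 + x/(k+1) := by positivity
    have := Real.log_le_sub_one_of_pos h1
    linarith
  · set t : ℝ := x/(k+1) with htdef
    have ht : 0 ≤ t := by positivity
    have h1 : (0:ℝ) < 1 + t := by positivity
    have hlog : t - t^2 ≤ Real.log (1+t) := by
      have h2 := Real.log_le_sub_one_of_pos (show (0:ℝ) < (1+t)⁻¹ by positivity)
      rw [Real.log_inv] at h2
      have h3 : (1+t)⁻¹ - 1 = -(t/(1+t)) := by field_simp; ring
      have h4 : t/(1+t) ≤ Real.log (1+t) := by rw [h3] at h2; linarith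
      have h5 : t - t^2 ≤ t/(1+t) := by
        rw [le_div_iff₀ h1]
        nlinarith
      linarith
    have ht2 : t^2 ≤ x^2 * ((1+(k:ℝ))^2)⁻¹ := by
      rw [htdef]
      rw [div_pow]
      rw [div_eq_mul_inv]
      have : ((k:ℝ)+1)^2 = (1+(k:ℝ))^2 := by ring
      rw [this]
    linarith

open Real Filter Finset in
lemma summable_g1 {x : ℝ} (hx : 0 < x) :
    Summable fun k : ℕ => (((k:ℝ)+1)⁻¹ - (x+k+1)⁻¹) := by
  refine Summable.of_nonneg_of_le (fun k => ?_) (fun k => ?_)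
    (((summable_inv_pow_add one_pos le_rfl).congr
      (fun k : ℕ => by norm_num : ∀ k : ℕ, (((1:ℝ)+k)^2)⁻¹ = ((1+(k:ℝ))^2)⁻¹)).mul_left x)
  · have : ((k:ℝ)+1) ≤ x+k+1 := by linarith
    have h2 : (x+(k:ℝ)+1)⁻¹ ≤ ((k:ℝ)+1)⁻¹ := inv_anti₀ (by positivity) this
    linarith
  · have he : ((k:ℝ)+1)⁻¹ - (x+k+1)⁻¹ = x * (((k+1:ℝ)) * (x+k+1))⁻¹ := by
      rw [mul_inv]
      field_simp
      ring
    rw [he]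
    apply mul_le_mul_of_nonneg_left _ (le_of_lt hx)
    apply inv_anti₀ (by positivity)
    nlinarith [Nat.cast_nonneg (α := ℝ) k]
set_option maxHeartbeats 1000000 in
open Real Filter Finset in
lemma pg_hasDerivAt (m : ℕ) {x : ℝ} (hx : 0 < x) :
    HasDerivAt (pg m) (pg (m+1) x) x := by
  have hxt : x ∈ Set.Ioo (x/2) (x+1) := ⟨by linarith, by linarith⟩
  have htopen : IsOpen (Set.Ioo (x/2) (x+1)) := isOpen_Ioo
  have htpre : IsPreconnected (Set.Ioo (x/2) (x+1)) := (convex_Ioo _ _).isPreconnected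
  have hypos : ∀ y ∈ Set.Ioo (x/2) (x+1), 0 < y := fun y hy => lt_trans (by linarith) hy.1
  match m with
  | 0 =>
    have key : HasDerivAt (fun y => ∑' k : ℕ, (y/(k+1) - Real.log (1+y/(k+1))))
        (∑' k : ℕ, (((k:ℝ)+1)⁻¹ - (x+k+1)⁻¹)) x := by
      refine hasDerivAt_tsum_of_isPreconnected
        (u := fun k : ℕ => (x+1) * (((1:ℝ)+k)^2)⁻¹)
        (g := fun (k : ℕ) (y : ℝ) => (y/(k+1) - Real.log (1+y/(k+1))))
        (g' := fun (k : ℕ) (y : ℝ) => (((k:ℝ)+1)⁻¹ - (y+k+1)⁻¹))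
        (((summable_inv_pow_add one_pos le_rfl)).mul_left (x+1)) htopen htpre
        ?_ ?_ hxt (summable_g0 hx.le) hxt
      · intro k y hy
        have hy0 := hypos y hy
        have ha : HasDerivAt (fun y : ℝ => y/((k:ℝ)+1)) (((k:ℝ)+1)⁻¹) y := by
          simpa [one_div] using (hasDerivAt_id y).div_const ((k:ℝ)+1)
        have hb : HasDerivAt (fun y : ℝ => 1 + y/((k:ℝ)+1)) (((k:ℝ)+1)⁻¹) y :=
          ha.const_add 1
        have hlog := hb.log (by positivity)
        have htot := ha.fun_sub hlog
        convert htot using 1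
        show ((k:ℝ)+1)⁻¹ - (y+(k:ℝ)+1)⁻¹ = _
        have h1 : ((k:ℝ)+1)⁻¹ / (1 + y/((k:ℝ)+1)) = (y+(k:ℝ)+1)⁻¹ := by
          rw [div_eq_iff (by positivity), inv_eq_one_div, inv_eq_one_div]
          field_simp
          ring
        rw [h1]
      · intro k y hy
        have hy0 := hypos y hy
        have he : ((k:ℝ)+1)⁻¹ - (y+k+1)⁻¹ = y * ((((k:ℝ)+1)) * (y+k+1))⁻¹ := by
          rw [mul_inv]; field_simp; ring
        rw [Real.norm_eq_abs, he, abs_of_nonneg (by positivity)]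
        have h1 : (((1:ℝ)+k)^2) ≤ (((k:ℝ)+1)) * (y+k+1) := by nlinarith
        calc y * ((((k:ℝ)+1)) * (y+k+1))⁻¹ ≤ (x+1) * ((((k:ℝ)+1)) * (y+k+1))⁻¹ := by
              apply mul_le_mul_of_nonneg_right (by linarith [hy.2]) (by positivity)
        _ ≤ (x+1) * (((1:ℝ)+k)^2)⁻¹ := by
              apply mul_le_mul_of_nonneg_left (inv_anti₀ (by positivity) h1) (by linarith)
    have hG : HasDerivAt (fun y => -Real.eulerMascheroniConstant*y - Real.log y
        + ∑' k : ℕ, (y/(k+1) - Real.log (1+y/(k+1))))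
        (pg 1 x) x := by
      have h1 := ((hasDerivAt_id x).const_mul (-Real.eulerMascheroniConstant)).fun_sub
        (Real.hasDerivAt_log hx.ne')
      have h2 := h1.fun_add key
      refine h2.congr_deriv ?_
      show _ = pg 1 x
      simp only [pg]
      ring
    apply hG.congr_of_eventuallyEq
    apply Filter.eventuallyEq_of_mem (isOpen_Ioi.mem_nhds (show x ∈ Set.Ioi 0 from hx))
    intro y hy
    have := (logGamma_hasSum hy).tsum_eq
    show Real.log (Real.Gamma y) = _
    dsimp only
    rw [this]; ring
  | 1 =>
    have key : HasDerivAt (fun y : ℝ => ∑' k : ℕ, (((k:ℝ)+1)⁻¹ - (y+k+1)⁻¹))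
        (∑' k : ℕ, ((x+k+1)^2)⁻¹) x := by
      refine hasDerivAt_tsum_of_isPreconnected
        (u := fun k : ℕ => ((x/2+k+1)^2)⁻¹)
        (g := fun (k : ℕ) (y : ℝ) => (((k:ℝ)+1)⁻¹ - (y+k+1)⁻¹))
        (g' := fun (k : ℕ) (y : ℝ) => ((y+k+1)^2)⁻¹)
        (summable_pg_type (half_pos hx) le_rfl) htopen htpre
        ?_ ?_ hxt (summable_g1 hx) hxt
      · intro k y hy
        have hy0 := hypos y hy
        have hinv : HasDerivAt (fun y : ℝ => (y+(k:ℝ)+1)⁻¹)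
            (-1/((y+(k:ℝ)+1)^2)) y := by
          have := ((hasDerivAt_id y).add_const ((k:ℝ)+1)).fun_inv (by positivity)
          simpa [← add_assoc] using this
        have h3 := hinv.const_sub (((k:ℝ)+1)⁻¹)
        convert h3 using 1
        show ((y + (k:ℝ) + 1) ^ 2)⁻¹ = _
        rw [neg_div, neg_neg, one_div]
      · intro k y hy
        rw [Real.norm_eq_abs, abs_of_nonneg (by positivity)]
        apply inv_anti₀ (by positivity)
        apply pow_le_pow_left₀ (by positivity)
        linarith [hy.1]
    have hG : HasDerivAt (pg 1) (pg 2 x) x := by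
      have hinv : HasDerivAt (fun y : ℝ => y⁻¹) (-1/x^2) x := by
        simpa using (hasDerivAt_id x).fun_inv hx.ne'
      have h1 := (hinv.const_sub (-Real.eulerMascheroniConstant)).fun_add key
      have h2 : HasDerivAt (pg 1) (-(-1/x^2) + ∑' k : ℕ, ((x+k+1)^2)⁻¹) x := by
        apply h1.congr_of_eventuallyEq
        apply Filter.Eventually.of_forall
        intro y
        show pg 1 y = _
        simp only [pg]
      convert h2 using 1
      show pg 2 x = _
      simp only [pg]
      have hsummable : Summable fun k : ℕ => ((x+k)^2)⁻¹ :=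
        summable_inv_pow_add hx le_rfl
      rw [Summable.tsum_eq_zero_add hsummable]
      have e1 : ∑' k : ℕ, ((x+((k:ℕ)+1:ℕ):ℝ)^2)⁻¹ = ∑' k : ℕ, ((x+(k:ℝ)+1)^2)⁻¹ := by
        congr 1; funext k; push_cast; ring_nf
      push_cast at e1 ⊢
      rw [e1]
      norm_num
      ring
    exact hG
  | (m+2) =>
    have key : HasDerivAt (fun y : ℝ => ∑' k : ℕ, (((y:ℝ)+k)^(m+2))⁻¹)
        (∑' k : ℕ, (-(m+2:ℝ) * ((x+k)^(m+3))⁻¹)) x := by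
      refine hasDerivAt_tsum_of_isPreconnected
        (u := fun k : ℕ => (m+2:ℝ) * ((x/2+k)^(m+3))⁻¹)
        (g := fun (k : ℕ) (y : ℝ) => ((y+k)^(m+2))⁻¹)
        (g' := fun (k : ℕ) (y : ℝ) => (-(m+2:ℝ) * ((y+k)^(m+3))⁻¹))
        ((summable_inv_pow_add (half_pos hx) (by omega)).mul_left _) htopen htpre
        ?_ ?_ hxt (summable_inv_pow_add hx (by omega)) hxt
      · intro k y hy
        have hy0 := hypos y hy
        have := hasDerivAt_inv_pow_shift (a := (k:ℝ)) (y := y)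
          (by positivity) (p := m+2) (by omega)
        refine this.congr_deriv ?_
        push_cast
        ring
      · intro k y hy
        have hy0 := hypos y hy
        rw [Real.norm_eq_abs, abs_mul, abs_neg,
          abs_of_nonneg (show (0:ℝ) ≤ (m+2:ℝ) by positivity),
          abs_of_nonneg (by positivity)]
        have : ((y+(k:ℝ))^(m+3))⁻¹ ≤ ((x/2+k)^(m+3))⁻¹ := by
          apply inv_anti₀ (by positivity)
          apply pow_le_pow_left₀ (by positivity)
          linarith [hy.1]
        exact mul_le_mul_of_nonneg_left this (by positivity)
    have h2 := key.const_mul ((-1:ℝ)^m * ((m+1).factorial : ℝ))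
    have hG : HasDerivAt (pg (m+2)) ((-1:ℝ)^m * ((m+1).factorial : ℝ)
        * ∑' k : ℕ, (-(m+2:ℝ) * ((x+k)^(m+3))⁻¹)) x := by
      apply h2.congr_of_eventuallyEq
      apply Filter.Eventually.of_forall
      intro y
      show pg (m+2) y = _
      simp only [pg]
    convert hG using 1
    show pg (m+3) x = _
    simp only [pg]
    rw [tsum_mul_left]
    rw [Nat.factorial_succ (m+1)]
    push_cast
    ring
open Real Filter Finset in
lemma S_iteratedDeriv (n r : ℕ) (hrn : r ≤ n) {m : ℕ} (hm : 1 ≤ m) :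
    SderivAt0 n r m = ∑ j ∈ Finset.Icc 1 r, ((2:ℝ)⁻¹)^m * pg m (((n:ℝ) - r + j)/2) := by
  set U : Set ℝ := Set.Ioi ((r:ℝ) - n - 1) with hUdef
  have hU : IsOpen U := isOpen_Ioi
  have h0U : (0:ℝ) ∈ U := by
    simp only [hUdef, Set.mem_Ioi]
    have : (r:ℝ) ≤ n := by exact_mod_cast hrn
    linarith
  have hpos : ∀ z ∈ U, ∀ j ∈ Finset.Icc 1 r, 0 < ((n:ℝ) - r + j + z)/2 := by
    intro z hz j hj
    rw [Finset.mem_Icc] at hj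
    have h1 : (1:ℝ) ≤ (j:ℝ) := by exact_mod_cast hj.1
    have h2 : (r:ℝ) - n - 1 < z := hz
    have : (0:ℝ) < (n:ℝ) - r + j + z := by linarith
    linarith
  set T : ℕ → ℝ → ℝ :=
    fun m z => ∑ j ∈ Finset.Icc 1 r, ((2:ℝ)⁻¹)^m * pg m (((n:ℝ) - r + j + z)/2) with hT
  have hTd : ∀ m : ℕ, ∀ z ∈ U, HasDerivAt (T m) (T (m+1) z) z := by
    intro m z hz
    apply HasDerivAt.fun_sum
    intro j hj
    have hin : HasDerivAt (fun z : ℝ => ((n:ℝ) - r + j + z)/2) (1/2) z := by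
      have := ((hasDerivAt_id z).const_add ((n:ℝ) - r + j)).div_const 2
      simpa using this
    have hcomp := (pg_hasDerivAt m (hpos z hz j hj)).comp z hin
    have := hcomp.const_mul (((2:ℝ)⁻¹)^m)
    refine this.congr_deriv ?_
    rw [pow_succ]
    ring
  set C : ℝ := ∑ j ∈ Finset.Icc 1 r, Real.log (Real.Gamma (((n : ℝ) - r + j)/2)) with hC
  have hS0 : S n r = fun z => T 0 z - C := by
    funext z
    rw [S, hT, hC, ← Finset.sum_sub_distrib]
    apply Finset.sum_congr rfl
    intro j _
    rw [pow_zero, one_mul]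
    rfl
  have hiter : ∀ m : ℕ, 1 ≤ m → ∀ z ∈ U, iteratedDeriv m (S n r) z = T m z := by
    intro m hm
    induction m with
    | zero => omega
    | succ m ih =>
      intro z hz
      rw [iteratedDeriv_succ]
      rcases Nat.eq_zero_or_pos m with h | h
      · subst h
        have : iteratedDeriv 0 (S n r) = fun w => T 0 w - C := by
          rw [iteratedDeriv_zero, hS0]
        rw [this]
        exact (((hTd 0 z hz).sub_const C)).deriv
      · have hev : iteratedDeriv m (S n r) =ᶠ[nhds z] T m :=
          Filter.eventuallyEq_of_mem (hU.mem_nhds hz) (fun w hw => ih h w hw)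
        rw [hev.deriv_eq]
        exact (hTd m z hz).deriv
  have := hiter m hm 0 h0U
  rw [SderivAt0, this, hT]
  apply Finset.sum_congr rfl
  intro j _
  norm_num
open Real Filter Finset in
lemma tendsto_log_ratio {x : ℝ} (hx : 0 < x) :
    Tendsto (fun K : ℕ => Real.log ((K:ℝ)+1) - Real.log (x+K)) atTop (nhds 0) := by
  have hK : Tendsto (fun K : ℕ => ((K:ℝ)+1)) atTop atTop :=
    tendsto_atTop_add_const_right _ 1 tendsto_natCast_atTop_atTop
  have h2a : Tendsto (fun K : ℕ => (x-1)/((K:ℝ)+1)) atTop (nhds 0) :=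
    Tendsto.div_atTop tendsto_const_nhds hK
  have h2 : Tendsto (fun K : ℕ => (x+(K:ℝ))/((K:ℝ)+1)) atTop (nhds 1) := by
    have := (tendsto_const_nhds (x := (1:ℝ)) (f := atTop (α := ℕ))).add h2a
    rw [add_zero] at this
    refine this.congr fun K => ?_
    have : ((K:ℝ)+1) ≠ 0 := by positivity
    field_simp
    ring
  have h3 : Tendsto (fun K : ℕ => Real.log ((x+(K:ℝ))/((K:ℝ)+1))) atTop (nhds 0) := by
    have := (Real.continuousAt_log one_ne_zero).tendsto.comp h2
    simpa [Function.comp_def] using this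
  have h4 := h3.neg
  rw [neg_zero] at h4
  refine h4.congr fun K => ?_
  rw [Real.log_div (by positivity) (by positivity)]
  ring

open Real Filter Finset in
lemma pg_one_bounds {x : ℝ} (hx : 1 ≤ x) :
    Real.log x - Real.eulerMascheroniConstant - 1 ≤ pg 1 x ∧
    pg 1 x ≤ Real.log x - Real.eulerMascheroniConstant + 2 := by
  have hx0 : 0 < x := by linarith
  set A : ℕ → ℝ := fun K => ∑ k ∈ Finset.range K, (((k:ℝ)+1)⁻¹ - (x+k+1)⁻¹) with hA
  have hAtend : Tendsto A atTop (nhds (∑' k : ℕ, (((k:ℝ)+1)⁻¹ - (x+k+1)⁻¹))) :=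
    (summable_g1 hx0).hasSum.tendsto_sum_nat
  -- lower telescopes
  have tel1 : ∀ K : ℕ, ∑ k ∈ Finset.range K, (Real.log ((k:ℝ)+2) - Real.log ((k:ℝ)+1))
      = Real.log ((K:ℝ)+1) := by
    intro K
    have h := Finset.sum_range_sub (fun i : ℕ => Real.log ((i:ℝ)+1)) K
    push_cast at h
    calc ∑ k ∈ Finset.range K, (Real.log ((k:ℝ)+2) - Real.log ((k:ℝ)+1))
        = ∑ k ∈ Finset.range K, (Real.log ((k:ℝ)+1+1) - Real.log ((k:ℝ)+1)) := by
          apply Finset.sum_congr rfl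
          intro k _
          rw [show (k:ℝ)+1+1 = (k:ℝ)+2 by ring]
    _ = Real.log ((K:ℝ)+1) - Real.log ((0:ℝ)+1) := by rw [h]
    _ = Real.log ((K:ℝ)+1) := by norm_num
  have tel2 : ∀ K : ℕ, ∑ k ∈ Finset.range K, (Real.log (x+(k:ℝ)+1) - Real.log (x+(k:ℝ)))
      = Real.log (x+(K:ℝ)) - Real.log x := by
    intro K
    have h := Finset.sum_range_sub (fun i : ℕ => Real.log (x+(i:ℝ))) K
    push_cast at h
    calc ∑ k ∈ Finset.range K, (Real.log (x+(k:ℝ)+1) - Real.log (x+(k:ℝ)))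
        = ∑ k ∈ Finset.range K, (Real.log (x+((k:ℝ)+1)) - Real.log (x+(k:ℝ))) := by
          apply Finset.sum_congr rfl
          intro k _
          rw [show x+((k:ℝ)+1) = x+(k:ℝ)+1 by ring]
    _ = Real.log (x+(K:ℝ)) - Real.log (x+(0:ℝ)) := by rw [h]
    _ = Real.log (x+(K:ℝ)) - Real.log x := by norm_num
  have tel3 : ∀ K : ℕ, ∑ k ∈ Finset.range K, (Real.log (x+(k:ℝ)+2) - Real.log (x+(k:ℝ)+1))
      = Real.log (x+(K:ℝ)+1) - Real.log (x+1) := by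
    intro K
    have h := Finset.sum_range_sub (fun i : ℕ => Real.log (x+(i:ℝ)+1)) K
    push_cast at h
    calc ∑ k ∈ Finset.range K, (Real.log (x+(k:ℝ)+2) - Real.log (x+(k:ℝ)+1))
        = ∑ k ∈ Finset.range K, (Real.log (x+((k:ℝ)+1)+1) - Real.log (x+(k:ℝ)+1)) := by
          apply Finset.sum_congr rfl
          intro k _
          rw [show x+((k:ℝ)+1)+1 = x+(k:ℝ)+2 by ring]
    _ = Real.log (x+(K:ℝ)+1) - Real.log (x+(0:ℝ)+1) := by rw [h]
    _ = Real.log (x+(K:ℝ)+1) - Real.log (x+1) := by norm_num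
  have hlower : ∀ K : ℕ, Real.log x + (Real.log ((K:ℝ)+1) - Real.log (x+(K:ℝ))) ≤ A K := by
    intro K
    have h1 : ∑ k ∈ Finset.range K, (Real.log ((k:ℝ)+2) - Real.log ((k:ℝ)+1))
        ≤ ∑ k ∈ Finset.range K, ((k:ℝ)+1)⁻¹ := by
      apply Finset.sum_le_sum
      intro k _
      have := log_succ_sub_le (a := (k:ℝ)+1) (by positivity)
      rw [show (k:ℝ)+1+1 = (k:ℝ)+2 by ring] at this
      linarith
    have h2 : ∑ k ∈ Finset.range K, (x+(k:ℝ)+1)⁻¹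
        ≤ ∑ k ∈ Finset.range K, (Real.log (x+(k:ℝ)+1) - Real.log (x+(k:ℝ))) := by
      apply Finset.sum_le_sum
      intro k _
      have := le_log_succ_sub (a := x+(k:ℝ)) (by positivity)
      rw [show x+(k:ℝ)+1 = x+(k:ℝ)+1 from rfl] at this
      linarith
    rw [hA]
    simp only
    rw [Finset.sum_sub_distrib]
    rw [tel1] at h1
    rw [tel2] at h2
    linarith
  have hupper : ∀ K : ℕ, A (K+1) ≤ 1 + Real.log (x+1) := by
    intro K
    have h1 : ∑ k ∈ Finset.range (K+1), ((k:ℝ)+1)⁻¹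
        ≤ 1 + Real.log ((K:ℝ)+1) := by
      rw [Finset.sum_range_succ']
      have h1a : ∑ k ∈ Finset.range K, (((k+1:ℕ):ℝ)+1)⁻¹
          ≤ ∑ k ∈ Finset.range K, (Real.log ((k:ℝ)+2) - Real.log ((k:ℝ)+1)) := by
        apply Finset.sum_le_sum
        intro k _
        have h := le_log_succ_sub (a := (k:ℝ)+1) (by positivity)
        push_cast
        rw [show (k:ℝ)+1+1 = (k:ℝ)+2 by ring] at h ⊢
        linarith
      rw [tel1] at h1a
      norm_num at h1a ⊢
      linarith
    have h2 : Real.log (x+(K:ℝ)+1+1) - Real.log (x+1)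
        ≤ ∑ k ∈ Finset.range (K+1), (x+(k:ℝ)+1)⁻¹ := by
      have h2a : ∑ k ∈ Finset.range (K+1), (Real.log (x+(k:ℝ)+2) - Real.log (x+(k:ℝ)+1))
          ≤ ∑ k ∈ Finset.range (K+1), (x+(k:ℝ)+1)⁻¹ := by
        apply Finset.sum_le_sum
        intro k _
        have h := log_succ_sub_le (a := x+(k:ℝ)+1) (by positivity)
        rw [show x+(k:ℝ)+1+1 = x+(k:ℝ)+2 by ring] at h
        linarith
      rw [tel3] at h2a
      push_cast at h2a ⊢
      rw [show x + ((K:ℝ)+1) + 1 = x + (K:ℝ) + 1 + 1 by ring] at h2a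
      linarith
    have h3 : Real.log ((K:ℝ)+1) ≤ Real.log (x+(K:ℝ)+1+1) := by
      apply Real.log_le_log (by positivity)
      linarith
    rw [hA]
    simp only
    rw [Finset.sum_sub_distrib]
    push_cast at h1 h2 ⊢
    linarith
  set σ : ℝ := ∑' k : ℕ, (((k:ℝ)+1)⁻¹ - (x+k+1)⁻¹) with hσ
  have hσlow : Real.log x ≤ σ := by
    have hL : Tendsto (fun K : ℕ => Real.log x + (Real.log ((K:ℝ)+1) - Real.log (x+(K:ℝ))))
        atTop (nhds (Real.log x)) := by
      have := (tendsto_const_nhds (x := Real.log x) (f := atTop (α := ℕ))).add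
        (tendsto_log_ratio hx0)
      simpa using this
    exact le_of_tendsto_of_tendsto' hL hAtend hlower
  have hσhigh : σ ≤ 1 + Real.log (x+1) := by
    apply le_of_tendsto hAtend
    filter_upwards [eventually_ge_atTop 1] with K hK
    obtain ⟨Kp, rfl⟩ : ∃ Kp, K = Kp + 1 := ⟨K-1, by omega⟩
    exact hupper Kp
  have hpg : pg 1 x = -Real.eulerMascheroniConstant - x⁻¹ + σ := rfl
  have hxinv : x⁻¹ ≤ 1 := by
    rw [inv_le_one_iff₀]; right; linarith
  have hxinv0 : 0 < x⁻¹ := by positivity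
  have hlog2 : Real.log (x+1) ≤ Real.log x + 1 := by
    have h1 : Real.log (x+1) - Real.log x ≤ x⁻¹ := log_succ_sub_le hx0
    linarith
  constructor
  · rw [hpg]; linarith
  · rw [hpg]; linarith
set_option maxHeartbeats 2000000 in
theorem stmt10 (r : ℕ → ℕ) (hr : ∀ n, 1 ≤ n → 1 ≤ r n ∧ r n ≤ n)
    (h0 : Tendsto (fun n : ℕ => (r n : ℝ) / n) atTop (nhds 0)) :
    Tendsto (fun n : ℕ => SderivAt0 n (r n) 1 / (((r n : ℝ) / 2) * Real.log n))
      atTop (nhds 1)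
    ∧ ∀ m : ℕ, 2 ≤ m →
        Tendsto
          (fun n : ℕ => SderivAt0 n (r n) m
            / ((-1 : ℝ) ^ m * ((m - 2).factorial : ℝ) * (r n : ℝ)
                / (2 * (n : ℝ) ^ (m - 1))))
          atTop (nhds 1) := by
  have hhalf : ∀ᶠ n : ℕ in atTop, (r n : ℝ) ≤ (n:ℝ)/2 := by
    have h2 : ∀ᶠ n : ℕ in atTop, (r n : ℝ)/n < 1/2 :=
      h0.eventually_lt_const (by norm_num)
    filter_upwards [h2, eventually_ge_atTop 1] with n hn hn1
    have hnpos : (0:ℝ) < n := by exact_mod_cast hn1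
    rw [div_lt_iff₀ hnpos] at hn
    linarith
  have hbase : ∀ᶠ n : ℕ in atTop,
      1 ≤ r n ∧ r n ≤ n ∧ (r n : ℝ) ≤ (n:ℝ)/2 ∧ (2:ℝ) ≤ (n:ℝ) := by
    filter_upwards [hhalf, eventually_ge_atTop 2] with n h1 h2
    have := hr n (by omega)
    exact ⟨this.1, this.2, h1, by exact_mod_cast h2⟩
  have hlogtop : Tendsto (fun n : ℕ => Real.log n) atTop atTop :=
    Real.tendsto_log_atTop.comp tendsto_natCast_atTop_atTop
  have hloginv : Tendsto (fun n : ℕ => (Real.log n)⁻¹) atTop (nhds 0) :=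
    hlogtop.inv_tendsto_atTop
  have hw : Tendsto (fun n : ℕ => ((n:ℝ) - r n + 1)/n) atTop (nhds 1) := by
    have h1 : Tendsto (fun n : ℕ => 1 - (r n:ℝ)/n + ((n:ℝ))⁻¹) atTop (nhds 1) := by
      have := ((tendsto_const_nhds (x := (1:ℝ)) (f := atTop (α := ℕ))).sub h0).add
        (tendsto_natCast_atTop_atTop (R := ℝ)).inv_tendsto_atTop
      simpa using this
    refine h1.congr' ?_
    filter_upwards [eventually_ge_atTop 1] with n hn
    have hnpos : (0:ℝ) < n := by exact_mod_cast hn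
    field_simp
  have hlogw : Tendsto (fun n : ℕ => Real.log (((n:ℝ) - r n + 1)/n)) atTop (nhds 0) := by
    have := (Real.continuousAt_log one_ne_zero).tendsto.comp hw
    simpa [Function.comp_def] using this
  constructor
  · -- m = 1 part
    set gam := Real.eulerMascheroniConstant with hgam
    set L : ℕ → ℝ := fun n =>
      1 + (Real.log (((n:ℝ) - r n + 1)/n) - Real.log 2 - gam - 1) * (Real.log n)⁻¹ with hL
    set Uu : ℕ → ℝ := fun n => 1 + (2 - gam) * (Real.log n)⁻¹ with hUu
    have hLt : Tendsto L atTop (nhds 1) := by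
      have hnum : Tendsto (fun n : ℕ =>
          (Real.log (((n:ℝ) - r n + 1)/n) - Real.log 2 - gam - 1)) atTop
          (nhds (0 - Real.log 2 - gam - 1)) :=
        ((hlogw.sub_const _).sub_const _).sub_const _
      have := (hnum.mul hloginv).const_add 1
      simpa using this
    have hUt : Tendsto Uu atTop (nhds 1) := by
      have := (hloginv.const_mul (2 - gam)).const_add 1
      simpa using this
    apply tendsto_of_tendsto_of_tendsto_of_le_of_le' hLt hUt
    · -- L n ≤ ratio
      filter_upwards [hbase, hlogtop.eventually_ge_atTop 1] with n hb hlog1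
      obtain ⟨hr1, hrn, hrhalf, hn2⟩ := hb
      have hnpos : (0:ℝ) < n := by linarith
      have hRpos : (0:ℝ) < r n := by exact_mod_cast hr1
      have hlogpos : (0:ℝ) < Real.log n := by linarith
      have hNR : (n:ℝ)/2 ≤ (n:ℝ) - r n := by linarith
      have hxminpos : (0:ℝ) < (n:ℝ) - r n + 1 := by linarith
      have key := S_iteratedDeriv n (r n) hrn (le_refl 1)
      have hsum_lb : ((r n : ℝ)) * ((2:ℝ)⁻¹ * (Real.log (((n:ℝ) - r n + 1)/2) - gam - 1))
          ≤ SderivAt0 n (r n) 1 := by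
        rw [key]
        have := Finset.card_nsmul_le_sum (Finset.Icc 1 (r n))
          (fun j => ((2:ℝ)⁻¹)^1 * pg 1 (((n : ℝ) - r n + j)/2))
          ((2:ℝ)⁻¹ * (Real.log (((n:ℝ) - r n + 1)/2) - gam - 1)) ?_
        · rw [Nat.card_Icc] at this
          simp only [Nat.add_sub_cancel, nsmul_eq_mul] at this
          exact this
        · intro j hj
          rw [Finset.mem_Icc] at hj
          have hj1 : (1:ℝ) ≤ (j:ℝ) := by exact_mod_cast hj.1
          have hxj1 : (1:ℝ) ≤ ((n:ℝ) - r n + j)/2 := by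
            rw [le_div_iff₀ (by norm_num)]
            linarith
          have hlb := (pg_one_bounds hxj1).1
          have hmono : Real.log (((n:ℝ) - r n + 1)/2) ≤ Real.log (((n:ℝ) - r n + j)/2) := by
            apply Real.log_le_log (by positivity)
            apply div_le_div_of_nonneg_right ?_ (by norm_num)
            linarith
          rw [pow_one]
          rw [← hgam] at hlb
          nlinarith
      rw [hL]
      simp only
      rw [le_div_iff₀ (by positivity)]
      have hlogxmin : Real.log (((n:ℝ) - r n + 1)/2)
          = Real.log (((n:ℝ) - r n + 1)/n) + Real.log n - Real.log 2 := by
        rw [Real.log_div hxminpos.ne' (by norm_num),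
          Real.log_div hxminpos.ne' hnpos.ne']
        ring
      have hexp : (1 + (Real.log (((n:ℝ) - r n + 1)/n) - Real.log 2 - gam - 1)
            * (Real.log n)⁻¹) * ((r n : ℝ)/2 * Real.log n)
          = (r n : ℝ) * ((2:ℝ)⁻¹ * (Real.log (((n:ℝ) - r n + 1)/2) - gam - 1)) := by
        rw [hlogxmin]
        field_simp
        ring
      rw [hexp]
      exact hsum_lb
    · -- ratio ≤ Uu n
      filter_upwards [hbase, hlogtop.eventually_ge_atTop 1] with n hb hlog1
      obtain ⟨hr1, hrn, hrhalf, hn2⟩ := hb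
      have hnpos : (0:ℝ) < n := by linarith
      have hRpos : (0:ℝ) < r n := by exact_mod_cast hr1
      have hlogpos : (0:ℝ) < Real.log n := by linarith
      have key := S_iteratedDeriv n (r n) hrn (le_refl 1)
      have hsum_ub : SderivAt0 n (r n) 1
          ≤ ((r n : ℝ)) * ((2:ℝ)⁻¹ * (Real.log n + 2 - gam)) := by
        rw [key]
        have := Finset.sum_le_card_nsmul (Finset.Icc 1 (r n))
          (fun j => ((2:ℝ)⁻¹)^1 * pg 1 (((n : ℝ) - r n + j)/2))
          ((2:ℝ)⁻¹ * (Real.log n + 2 - gam)) ?_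
        · rw [Nat.card_Icc] at this
          simp only [Nat.add_sub_cancel, nsmul_eq_mul] at this
          exact this
        · intro j hj
          rw [Finset.mem_Icc] at hj
          have hj1 : (1:ℝ) ≤ (j:ℝ) := by exact_mod_cast hj.1
          have hjr : (j:ℝ) ≤ (r n : ℝ) := by exact_mod_cast hj.2
          have hxj1 : (1:ℝ) ≤ ((n:ℝ) - r n + j)/2 := by
            rw [le_div_iff₀ (by norm_num)]
            linarith
          have hub := (pg_one_bounds hxj1).2
          have hmono : Real.log (((n:ℝ) - r n + j)/2) ≤ Real.log n := by
            apply Real.log_le_log (by linarith)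
            rw [div_le_iff₀ (by norm_num)]
            linarith
          rw [pow_one]
          rw [← hgam] at hub
          nlinarith
      rw [hUu]
      simp only
      rw [div_le_iff₀ (by positivity)]
      have hexp : (1 + (2 - gam) * (Real.log n)⁻¹) * ((r n : ℝ)/2 * Real.log n)
          = (r n : ℝ) * ((2:ℝ)⁻¹ * (Real.log n + 2 - gam)) := by
        field_simp
        ring
      rw [hexp]
      exact hsum_ub
  · -- m ≥ 2 part
    intro m hm
    obtain ⟨q, rfl⟩ : ∃ q, m = q + 2 := ⟨m - 2, by omega⟩
    have e2 : q + 2 - 2 = q := by omega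
    have e1 : q + 2 - 1 = q + 1 := by omega
    simp only [e1, e2]
    set T : ℝ → ℝ := fun x => ∑' k : ℕ, ((x+(k:ℝ))^(q+2))⁻¹ with hT
    set E : ℕ → ℝ := fun n => ((q:ℝ)+1) * (2:ℝ)⁻¹^(q+1) * (n:ℝ)^(q+1)
      * (∑ j ∈ Finset.Icc 1 (r n), T (((n:ℝ) - r n + j)/2)) / (r n) with hE
    set Uu : ℕ → ℝ := fun n => ((n:ℝ)/((n:ℝ) - r n + 1))^(q+1)
      * (1 + 2*((q:ℝ)+1)*(((n:ℝ) - r n + 1))⁻¹) with hUu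
    have hNtop : Tendsto (fun n : ℕ => (n:ℝ) - r n + 1) atTop atTop := by
      apply tendsto_atTop_mono' _ _
        ((tendsto_natCast_atTop_atTop (R := ℝ)).atTop_div_const (by norm_num : (0:ℝ) < 2))
      filter_upwards [hhalf] with n hn
      linarith
    have hinvN : Tendsto (fun n : ℕ => ((n:ℝ) - r n + 1)⁻¹) atTop (nhds 0) :=
      hNtop.inv_tendsto_atTop
    have hqr : Tendsto (fun n : ℕ => (n:ℝ)/((n:ℝ) - r n + 1)) atTop (nhds 1) := by
      have h1 := hw.inv₀ one_ne_zero
      rw [inv_one] at h1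
      refine h1.congr fun n => ?_
      rw [inv_div]
    have hUt : Tendsto Uu atTop (nhds 1) := by
      have h1 := hqr.pow (q+1)
      have h2 := (hinvN.const_mul (2*((q:ℝ)+1))).const_add 1
      have h3 := h1.mul h2
      norm_num at h3
      exact h3
    have hEt : Tendsto E atTop (nhds 1) := by
      apply tendsto_of_tendsto_of_tendsto_of_le_of_le' tendsto_const_nhds hUt
      · -- 1 ≤ E n
        filter_upwards [hbase] with n hb
        obtain ⟨hr1, hrn, hrhalf, hn2⟩ := hb
        have hnpos : (0:ℝ) < n := by linarith
        have hRpos : (0:ℝ) < r n := by exact_mod_cast hr1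
        have hxminpos : (0:ℝ) < ((n:ℝ) - r n + 1)/2 := by
          rw [lt_div_iff₀ (by norm_num)]
          linarith
        have hSg : (r n : ℝ) * ((((n:ℝ)/2)^(q+1))⁻¹/((q:ℝ)+1))
            ≤ ∑ j ∈ Finset.Icc 1 (r n), T (((n:ℝ) - r n + j)/2) := by
          have := Finset.card_nsmul_le_sum (Finset.Icc 1 (r n))
            (fun j => T (((n : ℝ) - r n + j)/2))
            ((((n:ℝ)/2)^(q+1))⁻¹/((q:ℝ)+1)) ?_
          · rw [Nat.card_Icc] at this
            simp only [Nat.add_sub_cancel, nsmul_eq_mul] at this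
            exact this
          · intro j hj
            rw [Finset.mem_Icc] at hj
            have hj1 : (1:ℝ) ≤ (j:ℝ) := by exact_mod_cast hj.1
            have hjr : (j:ℝ) ≤ (r n : ℝ) := by exact_mod_cast hj.2
            have hxj : (0:ℝ) < ((n:ℝ) - r n + j)/2 := by
              rw [lt_div_iff₀ (by norm_num)]
              linarith
            have hlb := (tsum_inv_pow_bounds hxj (by omega : 1 ≤ q+1)).1
            have hmono : ((((n:ℝ))/2)^(q+1))⁻¹ ≤ ((((n:ℝ) - r n + j)/2)^(q+1))⁻¹ := by
              apply inv_anti₀ (by positivity)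
              apply pow_le_pow_left₀ (by positivity)
              apply div_le_div_of_nonneg_right ?_ (by norm_num)
              linarith
            have hq1 : (0:ℝ) < (q:ℝ)+1 := by positivity
            calc ((((n:ℝ))/2)^(q+1))⁻¹/((q:ℝ)+1)
                ≤ ((((n:ℝ) - r n + j)/2)^(q+1))⁻¹/((q:ℝ)+1) :=
                  div_le_div_of_nonneg_right hmono hq1.le
            _ ≤ T (((n:ℝ) - r n + j)/2) := by
                  rw [hT]
                  push_cast at hlb ⊢
                  exact hlb
        rw [hE]
        simp only
        rw [le_div_iff₀ hRpos]
        have hkey : ((q:ℝ)+1) * (2:ℝ)⁻¹^(q+1) * (n:ℝ)^(q+1)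
            * ((r n : ℝ) * ((((n:ℝ)/2)^(q+1))⁻¹/((q:ℝ)+1))) = 1 * (r n : ℝ) := by
          have h2q : (((n:ℝ)/2)^(q+1))⁻¹ = 2^(q+1) / (n:ℝ)^(q+1) := by
            rw [div_pow, inv_div]
          rw [h2q]
          have hq0 : ((q:ℝ)+1) ≠ 0 := by positivity
          have hn0 : ((n:ℝ))^(q+1) ≠ 0 := by positivity
          rw [inv_pow]
          field_simp
        calc (1:ℝ) * (r n : ℝ) = _ := hkey.symm
        _ ≤ ((q:ℝ)+1) * (2:ℝ)⁻¹^(q+1) * (n:ℝ)^(q+1)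
            * (∑ j ∈ Finset.Icc 1 (r n), T (((n:ℝ) - r n + j)/2)) := by
              apply mul_le_mul_of_nonneg_left hSg (by positivity)
      · -- E n ≤ Uu n
        filter_upwards [hbase] with n hb
        obtain ⟨hr1, hrn, hrhalf, hn2⟩ := hb
        have hnpos : (0:ℝ) < n := by linarith
        have hRpos : (0:ℝ) < r n := by exact_mod_cast hr1
        have hNR1 : (0:ℝ) < (n:ℝ) - r n + 1 := by linarith
        have hxminpos : (0:ℝ) < ((n:ℝ) - r n + 1)/2 := by positivity
        have hSg : ∑ j ∈ Finset.Icc 1 (r n), T (((n:ℝ) - r n + j)/2)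
            ≤ (r n : ℝ) * (((((n:ℝ) - r n + 1)/2)^(q+1))⁻¹/((q:ℝ)+1)
              + ((((n:ℝ) - r n + 1)/2)^(q+2))⁻¹) := by
          have := Finset.sum_le_card_nsmul (Finset.Icc 1 (r n))
            (fun j => T (((n : ℝ) - r n + j)/2))
            (((((n:ℝ) - r n + 1)/2)^(q+1))⁻¹/((q:ℝ)+1)
              + ((((n:ℝ) - r n + 1)/2)^(q+2))⁻¹) ?_
          · rw [Nat.card_Icc] at this
            simp only [Nat.add_sub_cancel, nsmul_eq_mul] at this
            exact this
          · intro j hj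
            rw [Finset.mem_Icc] at hj
            have hj1 : (1:ℝ) ≤ (j:ℝ) := by exact_mod_cast hj.1
            have hxj : (0:ℝ) < ((n:ℝ) - r n + j)/2 := by
              rw [lt_div_iff₀ (by norm_num)]
              linarith
            have hub := (tsum_inv_pow_bounds hxj (by omega : 1 ≤ q+1)).2
            have hle : (((n:ℝ) - r n + 1)/2) ≤ (((n:ℝ) - r n + j)/2) := by
              apply div_le_div_of_nonneg_right ?_ (by norm_num)
              linarith
            have hm1 : ((((n:ℝ) - r n + j)/2)^(q+1))⁻¹ ≤ ((((n:ℝ) - r n + 1)/2)^(q+1))⁻¹ := by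
              apply inv_anti₀ (by positivity)
              exact pow_le_pow_left₀ (le_of_lt hxminpos) hle _
            have hm2 : ((((n:ℝ) - r n + j)/2)^(q+2))⁻¹ ≤ ((((n:ℝ) - r n + 1)/2)^(q+2))⁻¹ := by
              apply inv_anti₀ (by positivity)
              exact pow_le_pow_left₀ (le_of_lt hxminpos) hle _
            have hq1 : (0:ℝ) < (q:ℝ)+1 := by positivity
            have hTub : T (((n:ℝ) - r n + j)/2)
                ≤ ((((n:ℝ) - r n + j)/2)^(q+1))⁻¹/((q:ℝ)+1)
                  + ((((n:ℝ) - r n + j)/2)^(q+2))⁻¹ := by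
              rw [hT]
              push_cast at hub ⊢
              convert hub using 3
            have hstep : ((((n:ℝ) - r n + j)/2)^(q+1))⁻¹/((q:ℝ)+1)
                ≤ ((((n:ℝ) - r n + 1)/2)^(q+1))⁻¹/((q:ℝ)+1) :=
              div_le_div_of_nonneg_right hm1 hq1.le
            linarith
        rw [hE, hUu]
        simp only
        rw [div_le_iff₀ hRpos]
        have hkey : ((q:ℝ)+1) * (2:ℝ)⁻¹^(q+1) * (n:ℝ)^(q+1)
            * ((r n : ℝ) * (((((n:ℝ) - r n + 1)/2)^(q+1))⁻¹/((q:ℝ)+1)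
              + ((((n:ℝ) - r n + 1)/2)^(q+2))⁻¹))
            = (((n:ℝ)/((n:ℝ) - r n + 1))^(q+1)
              * (1 + 2*((q:ℝ)+1)*(((n:ℝ) - r n + 1))⁻¹)) * (r n : ℝ) := by
          have hq0 : ((q:ℝ)+1) ≠ 0 := by positivity
          have hd0 : ((n:ℝ) - r n + 1) ≠ 0 := hNR1.ne'
          simp only [inv_pow, div_pow, inv_div]
          field_simp
          ring
        calc ((q:ℝ)+1) * (2:ℝ)⁻¹^(q+1) * (n:ℝ)^(q+1)
            * (∑ j ∈ Finset.Icc 1 (r n), T (((n:ℝ) - r n + j)/2))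
            ≤ ((q:ℝ)+1) * (2:ℝ)⁻¹^(q+1) * (n:ℝ)^(q+1)
            * ((r n : ℝ) * (((((n:ℝ) - r n + 1)/2)^(q+1))⁻¹/((q:ℝ)+1)
              + ((((n:ℝ) - r n + 1)/2)^(q+2))⁻¹)) := by
              apply mul_le_mul_of_nonneg_left hSg (by positivity)
        _ = _ := hkey
    apply hEt.congr'
    filter_upwards [hbase] with n hb
    obtain ⟨hr1, hrn, hrhalf, hn2⟩ := hb
    have hnpos : (0:ℝ) < n := by linarith
    have hRpos : (0:ℝ) < r n := by exact_mod_cast hr1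
    have key := S_iteratedDeriv n (r n) hrn (show 1 ≤ q+2 by omega)
    have hpg : ∀ x : ℝ, pg (q+2) x = (-1:ℝ)^q * ((q+1).factorial : ℝ) * T x := fun x => rfl
    have hsum : SderivAt0 n (r n) (q+2)
        = (2:ℝ)⁻¹^(q+2) * ((-1:ℝ)^q * ((q+1).factorial : ℝ))
          * (∑ j ∈ Finset.Icc 1 (r n), T (((n:ℝ) - r n + j)/2)) := by
      rw [key, Finset.mul_sum]
      apply Finset.sum_congr rfl
      intro j _
      rw [hpg]
      ring
    rw [hE]
    simp only
    rw [hsum]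
    have hfac : ((q+1).factorial : ℝ) = ((q:ℝ)+1) * (q.factorial : ℝ) := by
      rw [Nat.factorial_succ]
      push_cast
      ring
    have hne1 : ((-1:ℝ)^q) ≠ 0 := by
      apply pow_ne_zero
      norm_num
    have hne2 : ((q.factorial : ℝ)) ≠ 0 := by
      exact_mod_cast (Nat.factorial_pos q).ne'
    have hne3 : ((n:ℝ))^(q+1) ≠ 0 := by positivity
    rw [hfac, div_div_eq_mul_div]
    field_simp
    ring
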